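/- For any p > 0 and a < b, the function F(α) = 1/(1 + e^{p(a - α)}) + 1/(1 + e^{p(α - b)}) - 1 is strictly increasing on (-∞, (a+b)/2] and strictly decreasing on [(a+b)/2, ∞). -/
import Mathlib

private lemma sig1 (p a x : ℝ) :
    1 / (1 + Real.exp (p * (a - x))) =
      Real.exp (p * x) / (Real.exp (p * x) + Real.exp (p * a)) := by
  have hE := Real.exp_pos (p * x)
  have hA := Real.exp_pos (p * a)
  have h : Real.exp (p * (a - x)) = Real.exp (p * a) / Real.exp (p * x) := by
    rw [mul_sub, Real.exp_sub]
  rw [h]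
  rw [div_eq_div_iff (by positivity) (by positivity)]
  field_simp

private lemma sig2 (p b x : ℝ) :
    1 / (1 + Real.exp (p * (x - b))) =
      Real.exp (p * b) / (Real.exp (p * x) + Real.exp (p * b)) := by
  have hE := Real.exp_pos (p * x)
  have hB := Real.exp_pos (p * b)
  have h : Real.exp (p * (x - b)) = Real.exp (p * x) / Real.exp (p * b) := by
    rw [mul_sub, Real.exp_sub]
  rw [h]
  rw [div_eq_div_iff (by positivity) (by positivity)]
  field_simp
  ring

private lemma key (A B u v : ℝ) (hA : 0 < A) (hAB : A < B) (hu : 0 < u)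
    (huv : u < v) (hprod : u * v < A * B) :
    u / (u + A) + B / (u + B) < v / (v + A) + B / (v + B) := by
  have hB : 0 < B := hA.trans hAB
  have h1 : 0 < u + A := by positivity
  have h2 : 0 < u + B := by positivity
  have h3 : 0 < v + A := by linarith
  have h4 : 0 < v + B := by linarith
  rw [div_add_div _ _ (ne_of_gt h1) (ne_of_gt h2),
      div_add_div _ _ (ne_of_gt h3) (ne_of_gt h4),
      div_lt_div_iff₀ (mul_pos h1 h2) (mul_pos h3 h4)]
  nlinarith [mul_pos (sub_pos.mpr huv) (sub_pos.mpr hAB),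
    mul_pos (mul_pos (sub_pos.mpr huv) (sub_pos.mpr hAB)) (sub_pos.mpr hprod)]

private lemma key2 (p a b : ℝ) (hp : 0 < p) (hab : a < b) {x y : ℝ}
    (hxy : x < y) (hsum : x + y < a + b) :
    (1 / (1 + Real.exp (p * (a - x))) + 1 / (1 + Real.exp (p * (x - b))) - 1) <
    (1 / (1 + Real.exp (p * (a - y))) + 1 / (1 + Real.exp (p * (y - b))) - 1) := by
  rw [sig1 p a x, sig1 p a y, sig2 p b x, sig2 p b y]
  have h := key (Real.exp (p * a)) (Real.exp (p * b)) (Real.exp (p * x)) (Real.exp (p * y))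
    (Real.exp_pos _) (Real.exp_lt_exp.mpr (by nlinarith)) (Real.exp_pos _)
    (Real.exp_lt_exp.mpr (by nlinarith)) ?_
  · linarith
  · rw [← Real.exp_add, ← Real.exp_add]
    exact Real.exp_lt_exp.mpr (by nlinarith)

private lemma key' (A B u v : ℝ) (hA : 0 < A) (hAB : A < B) (hu : 0 < u)
    (huv : u < v) (hprod : A * B < u * v) :
    v / (v + A) + B / (v + B) < u / (u + A) + B / (u + B) := by
  have hB : 0 < B := hA.trans hAB
  have h1 : 0 < u + A := by positivity
  have h2 : 0 < u + B := by positivity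
  have h3 : 0 < v + A := by linarith
  have h4 : 0 < v + B := by linarith
  rw [div_add_div _ _ (ne_of_gt h3) (ne_of_gt h4),
      div_add_div _ _ (ne_of_gt h1) (ne_of_gt h2),
      div_lt_div_iff₀ (mul_pos h3 h4) (mul_pos h1 h2)]
  nlinarith [mul_pos (mul_pos (sub_pos.mpr huv) (sub_pos.mpr hAB)) (sub_pos.mpr hprod)]

private lemma key2' (p a b : ℝ) (hp : 0 < p) (hab : a < b) {x y : ℝ}
    (hxy : x < y) (hsum : a + b < x + y) :
    (1 / (1 + Real.exp (p * (a - y))) + 1 / (1 + Real.exp (p * (y - b))) - 1) <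
    (1 / (1 + Real.exp (p * (a - x))) + 1 / (1 + Real.exp (p * (x - b))) - 1) := by
  rw [sig1 p a y, sig1 p a x, sig2 p b y, sig2 p b x]
  have h := key' (Real.exp (p * a)) (Real.exp (p * b)) (Real.exp (p * x)) (Real.exp (p * y))
    (Real.exp_pos _) (Real.exp_lt_exp.mpr (by nlinarith)) (Real.exp_pos _)
    (Real.exp_lt_exp.mpr (by nlinarith)) ?_
  · linarith
  · rw [← Real.exp_add, ← Real.exp_add]
    exact Real.exp_lt_exp.mpr (by nlinarith)

theorem stmt_3 (p a b : ℝ) (hp : 0 < p) (hab : a < b) :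
    StrictMonoOn
      (fun α : ℝ => 1 / (1 + Real.exp (p * (a - α))) + 1 / (1 + Real.exp (p * (α - b))) - 1)
      (Set.Iic ((a + b) / 2)) ∧
    StrictAntiOn
      (fun α : ℝ => 1 / (1 + Real.exp (p * (a - α))) + 1 / (1 + Real.exp (p * (α - b))) - 1)
      (Set.Ici ((a + b) / 2)) := by
  constructor
  · intro x hx y hy hxy
    simp only [Set.mem_Iic] at hx hy
    exact key2 p a b hp hab hxy (by linarith)
  · intro x hx y hy hxy
    simp only [Set.mem_Ici] at hx hy
    exact key2' p a b hp hab hxy (by linarith)
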